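/- For the birth-death chain on ℕ with birth rate λ and death rate μ n a/(β + n a) (fixed β > 0), the stationary distribution scaled by a/β is a negative binomial-type law π_β with π_β(n) ∝ ρ^n · Γ(β/a + 1 + n)/(Γ(β/a+1) n!) where ρ = λ/μ < 1, and for any A > ρ/(1−ρ), π_β([⌈Aβ/a⌉, ∞)) → 0 as β → ∞. -/

import Mathlib

open Filter

/-- Ratio of Gamma values bounded by a binomial coefficient. -/
lemma gamma_ratio_le (r : ℝ) (hr : 0 < r) (k : ℕ) (hrk : r ≤ k + 1) :
    ∀ n : ℕ, Real.Gamma (r + n) / (Real.Gamma r * n.factorial) ≤ ((n + k).choose k : ℝ) := by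
  have hΓr : 0 < Real.Gamma r := Real.Gamma_pos_of_pos hr
  intro n
  induction n with
  | zero => simp [hΓr.ne']
  | succ n ih =>
    have hΓn : 0 < Real.Gamma (r + n) := Real.Gamma_pos_of_pos (by positivity)
    have hstep : Real.Gamma (r + ((n + 1 : ℕ) : ℝ)) = (r + n) * Real.Gamma (r + n) := by
      have h : (r + ((n + 1 : ℕ) : ℝ)) = (r + n) + 1 := by push_cast; ring
      rw [h, Real.Gamma_add_one (by positivity)]
    have hchoose : (((n + 1) + k).choose k : ℝ)
        = ((n + k).choose k : ℝ) * (((n : ℝ) + k + 1) / ((n : ℝ) + 1)) := by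
      have e1 : (((n + 1) + k).choose k : ℝ)
          = ((n + 1 + k).factorial : ℝ) / ((k.factorial : ℝ) * ((n + 1).factorial : ℝ)) := by
        rw [Nat.cast_choose ℝ (by omega : k ≤ n + 1 + k), Nat.add_sub_cancel]
      have e2 : ((n + k).choose k : ℝ)
          = ((n + k).factorial : ℝ) / ((k.factorial : ℝ) * (n.factorial : ℝ)) := by
        rw [Nat.cast_choose ℝ (by omega : k ≤ n + k), Nat.add_sub_cancel]
      have e3 : ((n + 1 + k).factorial : ℝ) = ((n : ℝ) + 1 + k) * ((n + k).factorial : ℝ) := by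
        have : n + 1 + k = (n + k) + 1 := by omega
        rw [this, Nat.factorial_succ]
        push_cast; ring
      have e4 : (((n + 1)).factorial : ℝ) = ((n : ℝ) + 1) * (n.factorial : ℝ) := by
        rw [Nat.factorial_succ]; push_cast; ring
      rw [e1, e2, e3, e4]
      have h1 : (k.factorial : ℝ) ≠ 0 := by positivity
      have h2 : (n.factorial : ℝ) ≠ 0 := by positivity
      have h3 : ((n : ℝ) + 1) ≠ 0 := by positivity
      field_simp
      ring
    have key : Real.Gamma (r + n) / (Real.Gamma r * n.factorial) * ((r + n) / ((n : ℝ) + 1))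
        ≤ ((n + k).choose k : ℝ) * (((n : ℝ) + k + 1) / ((n : ℝ) + 1)) := by
      apply mul_le_mul ih ?_ (by positivity) (Nat.cast_nonneg _)
      have h3 : (0:ℝ) < (n : ℝ) + 1 := by positivity
      rw [div_le_div_iff₀ h3 h3]
      nlinarith [hrk, Nat.cast_nonneg (α := ℝ) n, Nat.cast_nonneg (α := ℝ) k]
    calc Real.Gamma (r + ((n + 1 : ℕ) : ℝ)) / (Real.Gamma r * ((n + 1).factorial : ℝ))
        = Real.Gamma (r + n) / (Real.Gamma r * n.factorial) * ((r + n) / ((n : ℝ) + 1)) := by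
          rw [hstep, Nat.factorial_succ]
          have h3 : ((n : ℝ) + 1) ≠ 0 := by positivity
          have h2 : (n.factorial : ℝ) ≠ 0 := by positivity
          push_cast
          field_simp
      _ ≤ ((n + k).choose k : ℝ) * (((n : ℝ) + k + 1) / ((n : ℝ) + 1)) := key
      _ = (((n + 1) + k).choose k : ℝ) := hchoose.symm

/-- Chernoff-type bound for the negative binomial tail. -/
lemma tail_le (ρ θ x r : ℝ) (k : ℕ) (π0 : ℕ → ℝ)
    (hρ0 : 0 < ρ) (hθ1 : 1 < θ) (h1ρ : 0 < 1 - ρ) (h1ρθ : 0 < 1 - ρ * θ)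
    (hr0 : 0 < r) (hrk : r ≤ k + 1)
    (hπ0 : ∀ n : ℕ, π0 n =
      (1 - ρ) ^ r * ρ ^ n * Real.Gamma (r + n) / (Real.Gamma r * n.factorial)) :
    ∑' n : ℕ, (if x ≤ (n : ℝ) then π0 n else 0) ≤
      (1 - ρ) ^ r * θ ^ (-x) * (1 / (1 - ρ * θ) ^ (k + 1)) := by
  have hθ0 : 0 < θ := lt_trans one_pos hθ1
  have hΓr : 0 < Real.Gamma r := Real.Gamma_pos_of_pos hr0
  have hρθ : 0 < ρ * θ := mul_pos hρ0 hθ0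
  have hsum : HasSum (fun n : ℕ => ((1 - ρ) ^ r * θ ^ (-x)) * (((n + k).choose k : ℝ) * (ρ * θ) ^ n))
      ((1 - ρ) ^ r * θ ^ (-x) * (1 / (1 - ρ * θ) ^ (k + 1))) := by
    apply HasSum.mul_left
    apply hasSum_choose_mul_geometric_of_norm_lt_one k
    rw [Real.norm_eq_abs, abs_of_pos hρθ]; linarith
  have hbound : ∀ n : ℕ, (if x ≤ (n : ℝ) then π0 n else 0) ≤
      ((1 - ρ) ^ r * θ ^ (-x)) * (((n + k).choose k : ℝ) * (ρ * θ) ^ n) := by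
    intro n
    by_cases hn : x ≤ (n : ℝ)
    · rw [if_pos hn, hπ0, mul_div_assoc]
      have hΓn : 0 < Real.Gamma (r + n) := Real.Gamma_pos_of_pos (by positivity)
      have hg := gamma_ratio_le r hr0 k hrk n
      have hg0 : 0 ≤ Real.Gamma (r + n) / (Real.Gamma r * n.factorial) := by positivity
      have h1 : (1 : ℝ) ≤ θ ^ n * θ ^ (-x) := by
        have h2 : θ ^ (0 : ℝ) ≤ θ ^ ((n : ℝ) + -x) :=
          Real.rpow_le_rpow_of_exponent_le hθ1.le (by linarith)
        rw [Real.rpow_zero, Real.rpow_add hθ0, Real.rpow_natCast] at h2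
        exact h2
      have hbase : 0 ≤ (1 - ρ) ^ r * ρ ^ n := by positivity
      calc (1 - ρ) ^ r * ρ ^ n * (Real.Gamma (r + n) / (Real.Gamma r * n.factorial))
          ≤ (1 - ρ) ^ r * ρ ^ n * (Real.Gamma (r + n) / (Real.Gamma r * n.factorial))
              * (θ ^ n * θ ^ (-x)) :=
            le_mul_of_one_le_right (mul_nonneg hbase hg0) h1
        _ ≤ (1 - ρ) ^ r * ρ ^ n * ((n + k).choose k : ℝ) * (θ ^ n * θ ^ (-x)) := by
            apply mul_le_mul_of_nonneg_right (mul_le_mul_of_nonneg_left hg hbase)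
            positivity
        _ = ((1 - ρ) ^ r * θ ^ (-x)) * (((n + k).choose k : ℝ) * (ρ * θ) ^ n) := by
            rw [mul_pow]; ring
    · rw [if_neg hn]
      positivity
  have hnonneg : ∀ n : ℕ, 0 ≤ (if x ≤ (n : ℝ) then π0 n else 0) := by
    intro n
    by_cases hn : x ≤ (n : ℝ)
    · rw [if_pos hn, hπ0]
      have hΓn : 0 < Real.Gamma (r + n) := Real.Gamma_pos_of_pos (by positivity)
      positivity
    · rw [if_neg hn]
  have hsumm : Summable (fun n : ℕ => if x ≤ (n : ℝ) then π0 n else 0) :=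
    Summable.of_nonneg_of_le hnonneg hbound hsum.summable
  calc ∑' n : ℕ, (if x ≤ (n : ℝ) then π0 n else 0)
      ≤ ∑' n : ℕ, ((1 - ρ) ^ r * θ ^ (-x)) * (((n + k).choose k : ℝ) * (ρ * θ) ^ n) :=
        Summable.tsum_le_tsum hbound hsumm hsum.summable
    _ = (1 - ρ) ^ r * θ ^ (-x) * (1 / (1 - ρ * θ) ^ (k + 1)) := hsum.tsum_eq

/-- Existence of a tilting parameter `θ`. -/
lemma exists_theta (ρ A : ℝ) (hρ0 : 0 < ρ) (hρ1 : ρ < 1) (hA : ρ / (1 - ρ) < A) :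
    ∃ θ : ℝ, 1 < θ ∧ ρ * θ < 1 ∧
      Real.log (1 - ρ) - A * Real.log θ - Real.log (1 - ρ * θ) < 0 := by
  have h1ρ : 0 < 1 - ρ := by linarith
  set f : ℝ → ℝ := fun x => A * Real.log x + Real.log (1 - ρ * x) with hf
  have hd : HasDerivAt f (A - ρ / (1 - ρ)) 1 := by
    have h2 : HasDerivAt (fun x : ℝ => 1 - ρ * x) (-ρ) 1 := by
      simpa [Pi.sub_def] using (hasDerivAt_const (1 : ℝ) (1 : ℝ)).sub ((hasDerivAt_id (1 : ℝ)).const_mul ρ)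
    have h3 : HasDerivAt (fun x : ℝ => Real.log (1 - ρ * x)) (-ρ / (1 - ρ)) 1 := by
      have := h2.log (by simp only [mul_one]; linarith : (1 : ℝ) - ρ * 1 ≠ 0)
      simpa using this
    have h4 : HasDerivAt (fun x : ℝ => A * Real.log x) A 1 := by
      simpa using (Real.hasDerivAt_log one_ne_zero).const_mul A
    have := h4.add h3
    simpa [hf, neg_div, ← sub_eq_add_neg, Pi.add_def] using this
  rw [hasDerivAt_iff_tendsto_slope] at hd
  have hpos : ∀ᶠ y in nhdsWithin (1 : ℝ) {(1 : ℝ)}ᶜ, 0 < slope f 1 y :=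
    hd.eventually (eventually_gt_nhds (by linarith))
  have h2 : ∀ᶠ y in nhdsWithin (1 : ℝ) (Set.Ioi 1), 0 < slope f 1 y :=
    hpos.filter_mono (nhdsWithin_mono 1 (show Set.Ioi (1:ℝ) ⊆ {(1:ℝ)}ᶜ from
      fun y hy => Set.mem_compl_singleton_iff.mpr (ne_of_gt hy)))
  have h3 : ∀ᶠ y in nhdsWithin (1 : ℝ) (Set.Ioi 1), y < 1 / ρ := by
    have hm : Set.Iio (1 / ρ) ∈ nhdsWithin (1 : ℝ) (Set.Ioi 1) :=
      nhdsWithin_le_nhds (Iio_mem_nhds (one_lt_one_div hρ0 hρ1))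
    exact Filter.eventually_of_mem hm (fun y hy => hy)
  have h4 : ∀ᶠ y in nhdsWithin (1 : ℝ) (Set.Ioi 1), (1 : ℝ) < y :=
    eventually_mem_nhdsWithin
  obtain ⟨x, hx1, hx2, hx3⟩ := (h2.and (h3.and h4)).exists
  have hρx : ρ * x < 1 := by
    have := (lt_div_iff₀ hρ0).mp hx2
    linarith [this, mul_comm x ρ]
  refine ⟨x, hx3, hρx, ?_⟩
  rw [slope_def_field] at hx1
  have hx0 : 0 < x - 1 := by linarith
  have hfx : 0 < f x - f 1 := by
    have h := mul_pos hx1 hx0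
    rwa [div_mul_cancel₀ _ (ne_of_gt hx0)] at h
  simp only [hf, Real.log_one, mul_zero, mul_one, zero_add] at hfx
  linarith

/-- The stationary distribution of the scaled birth-death chain with birth
rate `λβ` and death rate `μβ·(na)/(β+na)` is the negative-binomial-type law
`π_β(n) = (1−ρ)^{β/a+1} ρ^n Γ(β/a+1+n)/(Γ(β/a+1) n!)` with `ρ = λ/μ < 1`;
for any `A > ρ/(1−ρ)`, the mass beyond level `Aβ/a` vanishes as `β → ∞`. -/
theorem negative_binomial_tail_vanishes (lam mu a ρ : ℝ)
    (hlam : 0 < lam) (hmu : 0 < mu) (ha : 0 < a)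
    (hρdef : ρ = lam / mu) (hρ0 : 0 < ρ) (hρ1 : ρ < 1)
    (π : ℕ → ℕ → ℝ)
    (hπ : ∀ (β n : ℕ), π β n =
      (1 - ρ) ^ ((β : ℝ) / a + 1) * ρ ^ n *
        Real.Gamma ((β : ℝ) / a + 1 + n) /
        (Real.Gamma ((β : ℝ) / a + 1) * n.factorial))
    (A : ℝ) (hA : ρ / (1 - ρ) < A) :
    Filter.Tendsto
      (fun β : ℕ => ∑' n : ℕ, if A * β / a ≤ (n : ℝ) then π β n else 0)
      Filter.atTop (nhds 0) := by
  have h1ρ : 0 < 1 - ρ := by linarith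
  obtain ⟨θ, hθ1, hθρ, hθkey⟩ := exists_theta ρ A hρ0 hρ1 hA
  have hθ0 : 0 < θ := lt_trans one_pos hθ1
  have h1ρθ : 0 < 1 - ρ * θ := by linarith
  have hρθ : 0 < ρ * θ := mul_pos hρ0 hθ0
  set c : ℝ := (Real.log (1 - ρ) - A * Real.log θ - Real.log (1 - ρ * θ)) / a with hc
  set d : ℝ := Real.log (1 - ρ) - 2 * Real.log (1 - ρ * θ) with hd
  have hcneg : c < 0 := div_neg_of_neg_of_pos hθkey ha
  apply squeeze_zero (g := fun β : ℕ => Real.exp d * Real.exp c ^ β)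
  · intro β
    apply tsum_nonneg
    intro n
    by_cases hn : A * β / a ≤ (n : ℝ)
    · rw [if_pos hn, hπ]
      have hΓn : 0 < Real.Gamma ((β : ℝ) / a + 1 + n) := Real.Gamma_pos_of_pos (by positivity)
      have hΓr : 0 < Real.Gamma ((β : ℝ) / a + 1) := Real.Gamma_pos_of_pos (by positivity)
      positivity
    · rw [if_neg hn]
  · intro β
    have hr0 : 0 < (β : ℝ) / a + 1 := by positivity
    have hrk : (β : ℝ) / a + 1 ≤ (⌈(β : ℝ) / a⌉₊ : ℝ) + 1 := by
      have := Nat.le_ceil ((β : ℝ) / a)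
      linarith
    have hT := tail_le ρ θ (A * (β : ℝ) / a) ((β : ℝ) / a + 1) ⌈(β : ℝ) / a⌉₊ (π β)
      hρ0 hθ1 h1ρ h1ρθ hr0 hrk (hπ β)
    refine le_trans hT ?_
    have hk2 : (⌈(β : ℝ) / a⌉₊ : ℝ) + 1 ≤ (β : ℝ) / a + 2 := by
      have := Nat.ceil_lt_add_one (show 0 ≤ (β : ℝ) / a by positivity)
      linarith
    have hm : (1 : ℝ) / (1 - ρ * θ) ^ (⌈(β : ℝ) / a⌉₊ + 1) ≤
        (1 - ρ * θ) ^ (-((β : ℝ) / a + 2)) := by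
      rw [one_div, ← Real.rpow_natCast (1 - ρ * θ) (⌈(β : ℝ) / a⌉₊ + 1), ← Real.rpow_neg h1ρθ.le]
      apply Real.rpow_le_rpow_of_exponent_ge h1ρθ (by linarith)
      push_cast
      linarith
    have hstep : (1 - ρ) ^ ((β : ℝ) / a + 1) * θ ^ (-(A * (β : ℝ) / a)) *
          (1 / (1 - ρ * θ) ^ (⌈(β : ℝ) / a⌉₊ + 1))
        ≤ (1 - ρ) ^ ((β : ℝ) / a + 1) * θ ^ (-(A * (β : ℝ) / a)) *
          (1 - ρ * θ) ^ (-((β : ℝ) / a + 2)) := by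
      apply mul_le_mul_of_nonneg_left hm
      positivity
    refine le_trans hstep (le_of_eq ?_)
    rw [Real.rpow_def_of_pos h1ρ, Real.rpow_def_of_pos hθ0, Real.rpow_def_of_pos h1ρθ,
      ← Real.exp_add, ← Real.exp_add, ← Real.exp_nat_mul, ← Real.exp_add]
    congr 1
    rw [hc, hd]
    field_simp
    ring
  · have h1 : Real.exp c < 1 := Real.exp_lt_one_iff.mpr hcneg
    simpa using
      (tendsto_pow_atTop_nhds_zero_of_lt_one (Real.exp_pos c).le h1).const_mul (Real.exp d)
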